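/- Let H₊ and H₋ be complex Hilbert spaces, H = H₊ × H₋ with its standard form ω. Let N be a maximal completely positive-definite closed subspace of H and let L be a closed subspace that is Lagrangian, i.e. L = L^⊥s. Then N and L are transversal in H: N ∩ L = {0} and N + L = H. -/

import Mathlib

noncomputable section

open Complex

variable {Hp Hm : Type*}
  [NormedAddCommGroup Hp] [InnerProductSpace ℂ Hp] [CompleteSpace Hp]
  [NormedAddCommGroup Hm] [InnerProductSpace ℂ Hm] [CompleteSpace Hm]

/-- The standard strong symplectic form `ω((x₁,x₂),(y₁,y₂)) = i⟨x₁,y₁⟩ − i⟨x₂,y₂⟩` on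
`H₊ × H₋`, linear in the first argument and conjugate-linear in the second.
(Since Mathlib's `inner` is conjugate-linear in its *first* argument, the paper's
`⟨a,b⟩` is `inner b a`.) -/
def stdForm (x y : Hp × Hm) : ℂ :=
  Complex.I * (inner ℂ y.1 x.1 : ℂ) - Complex.I * (inner ℂ y.2 x.2 : ℂ)

/-- The symplectic complement of a set `M ⊆ H₊ × H₋`:
`M^⊥s = {y : ω(x,y) = 0 for all x ∈ M}`. -/
def symCompl (M : Set (Hp × Hm)) : Set (Hp × Hm) := {y | ∀ x ∈ M, stdForm x y = 0}

/-- `M` is a completely positive-definite closed subspace. -/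
def IsCPD (M : Submodule ℂ (Hp × Hm)) : Prop :=
  IsClosed (M : Set (Hp × Hm)) ∧
    ∃ c : ℝ, 0 < c ∧ ∀ x ∈ M, c * ‖x‖ ^ 2 ≤ (-Complex.I * stdForm x x).re

/-- `M` is a maximal completely positive-definite subspace. -/
def IsMaxCPD (M : Submodule ℂ (Hp × Hm)) : Prop :=
  IsCPD M ∧ ∀ N : Submodule ℂ (Hp × Hm), IsCPD N → M ≤ N → N = M

/-- The real part of `-i·ω(x,x)` is `‖x₁‖² - ‖x₂‖²`. -/
lemma aux_Qre (x : Hp × Hm) : (-Complex.I * stdForm x x).re = ‖x.1‖ ^ 2 - ‖x.2‖ ^ 2 := by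
  have h : -Complex.I * stdForm x x = ((‖x.1‖ ^ 2 - ‖x.2‖ ^ 2 : ℝ) : ℂ) := by
    simp only [stdForm, inner_self_eq_norm_sq_to_K]
    push_cast
    ring_nf
    simp [Complex.I_sq]
    ring
  rw [h, Complex.ofReal_re]

lemma aux_neutral {x : Hp × Hm} (hx : stdForm x x = 0) : ‖x.1‖ = ‖x.2‖ := by
  have h := aux_Qre x
  rw [hx, mul_zero] at h
  have h2 : ‖x.1‖ ^ 2 = ‖x.2‖ ^ 2 := by
    have h0 : ((0:ℂ)).re = 0 := rfl
    rw [h0] at h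
    linarith
  calc ‖x.1‖ = Real.sqrt (‖x.1‖ ^ 2) := (Real.sqrt_sq (norm_nonneg _)).symm
    _ = Real.sqrt (‖x.2‖ ^ 2) := by rw [h2]
    _ = ‖x.2‖ := Real.sqrt_sq (norm_nonneg _)

lemma aux_sq_le {a b : ℝ} (ha : 0 ≤ a) (hb : 0 ≤ b) (h : a ^ 2 ≤ b ^ 2) : a ≤ b := by
  nlinarith

/-- A subspace on which the second coordinate is controlled by the first, and whose first
projection is surjective, is the graph of a continuous linear map. -/
lemma aux_graphCLM (M : Submodule ℂ (Hp × Hm)) (k : ℝ)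
    (hb : ∀ x ∈ M, ‖x.2‖ ≤ k * ‖x.1‖) (hs : ∀ u : Hp, ∃ v, (u, v) ∈ M) :
    ∃ T : Hp →L[ℂ] Hm, (∀ u, (u, T u) ∈ M) ∧ ∀ u, ‖T u‖ ≤ k * ‖u‖ := by
  have uniq : ∀ u v v', (u, v) ∈ M → (u, v') ∈ M → v = v' := by
    intro u v v' h h'
    have hmem : ((u, v) - (u, v') : Hp × Hm) ∈ M := M.sub_mem h h'
    have hb2 := hb _ hmem
    simp only [Prod.fst_sub, Prod.snd_sub, sub_self, norm_zero, mul_zero] at hb2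
    have : ‖v - v'‖ = 0 := le_antisymm hb2 (norm_nonneg _)
    rwa [norm_sub_eq_zero_iff] at this
  choose f hf using hs
  have hadd : ∀ u v, f (u + v) = f u + f v := by
    intro u v
    exact uniq (u + v) _ _ (hf _) (by simpa using M.add_mem (hf u) (hf v))
  have hsmul : ∀ (t : ℂ) u, f (t • u) = t • f u := by
    intro t u
    exact uniq (t • u) _ _ (hf _) (by simpa [Prod.smul_mk] using M.smul_mem t (hf u))
  let T₀ : Hp →ₗ[ℂ] Hm := { toFun := f, map_add' := hadd, map_smul' := hsmul }
  have hbd : ∀ u, ‖T₀ u‖ ≤ k * ‖u‖ := by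
    intro u
    exact hb _ (hf u)
  exact ⟨T₀.mkContinuous k hbd, fun u => hf u, fun u => hbd u⟩

/-- A maximal completely positive-definite subspace is the graph of a strict contraction
defined on all of `H₊`. -/
lemma aux_maxCPD (N : Submodule ℂ (Hp × Hm)) (hN : IsMaxCPD N) :
    ∃ k : ℝ, 0 ≤ k ∧ k < 1 ∧ (∀ x ∈ N, ‖x.2‖ ≤ k * ‖x.1‖) ∧ (∀ u : Hp, ∃ v, (u, v) ∈ N) := by
  obtain ⟨⟨hcl, c, hc, hest₀⟩, hmax⟩ := hN
  have hest : ∀ x ∈ N, c * ‖x‖ ^ 2 ≤ ‖x.1‖ ^ 2 - ‖x.2‖ ^ 2 := by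
    intro x hx; rw [← aux_Qre]; exact hest₀ x hx
  have hsq : ∀ x ∈ N, (1 + c) * ‖x.2‖ ^ 2 ≤ ‖x.1‖ ^ 2 := by
    intro x hx
    have h1 : ‖x.2‖ ≤ ‖x‖ := norm_snd_le x
    have h2 := hest x hx
    have h3 : ‖x.2‖ ^ 2 ≤ ‖x‖ ^ 2 := by nlinarith [norm_nonneg x.2, norm_nonneg x]
    nlinarith [mul_le_mul_of_nonneg_left h3 hc.le]
  set k : ℝ := Real.sqrt (1 / (1 + c)) with hk
  have hc1 : (0:ℝ) < 1 + c := by linarith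
  have hk0 : 0 ≤ k := Real.sqrt_nonneg _
  have hksq : k ^ 2 = 1 / (1 + c) := Real.sq_sqrt (by positivity)
  have hk1 : k < 1 := by
    have hlt : 1 / (1 + c) < 1 := by rw [div_lt_one hc1]; linarith
    nlinarith [hksq, hk0]
  have hb : ∀ x ∈ N, ‖x.2‖ ≤ k * ‖x.1‖ := by
    intro x hx
    apply aux_sq_le (norm_nonneg _) (by positivity)
    have := hsq x hx
    rw [mul_pow, hksq]
    rw [div_mul_eq_mul_div, one_mul, le_div_iff₀ hc1]
    nlinarith
  have hb1 : ∀ x ∈ N, ‖x.2‖ ≤ ‖x.1‖ := by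
    intro x hx
    calc ‖x.2‖ ≤ k * ‖x.1‖ := hb x hx
      _ ≤ 1 * ‖x.1‖ := by
          apply mul_le_mul_of_nonneg_right (le_of_lt hk1) (norm_nonneg _)
      _ = ‖x.1‖ := one_mul _
  refine ⟨k, hk0, hk1, hb, ?_⟩
  -- the first projection of N equals all of Hp
  set D := N.map (LinearMap.fst ℂ Hp Hm) with hD
  have hDclosed : IsClosed (D : Set Hp) := by
    haveI : CompleteSpace N := hcl.completeSpace_coe
    let f : N →ₗᵢ[ℂ] Hp :=
      ⟨(LinearMap.fst ℂ Hp Hm).comp N.subtype, by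
        intro x
        have hx : ‖(x : Hp × Hm).2‖ ≤ ‖(x : Hp × Hm).1‖ := hb1 _ x.2
        show ‖(x : Hp × Hm).1‖ = ‖(x : Hp × Hm)‖
        rw [Prod.norm_def, max_eq_left hx]⟩
    have hr : Set.range f = (D : Set Hp) := by
      ext y
      constructor
      · rintro ⟨x, rfl⟩; exact ⟨x, x.2, rfl⟩
      · rintro ⟨x, hx, rfl⟩; exact ⟨⟨x, hx⟩, rfl⟩
    rw [← hr]
    exact f.isometry.isClosedEmbedding.isClosed_range
  have horth : Dᗮ = ⊥ := by
    rw [Submodule.eq_bot_iff]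
    intro a ha
    set c' := min c 1 with hc'def
    have hc'0 : 0 < c' := lt_min hc one_pos
    set N'' := N ⊔ (ℂ ∙ ((a, (0 : Hm)) : Hp × Hm)) with hN''
    have hest'' : ∀ x ∈ N'', c' * ‖x‖ ^ 2 ≤ ‖x.1‖ ^ 2 - ‖x.2‖ ^ 2 := by
      intro x hx
      rcases Submodule.mem_sup.1 hx with ⟨n, hn, s, hs, rfl⟩
      rcases Submodule.mem_span_singleton.1 hs with ⟨t, rfl⟩
      have hs1 : (n + t • ((a, (0 : Hm)) : Hp × Hm)).1 = n.1 + t • a := by simp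
      have hs2 : (n + t • ((a, (0 : Hm)) : Hp × Hm)).2 = n.2 := by simp
      have hinner : (inner ℂ n.1 (t • a) : ℂ) = 0 := by
        rw [inner_smul_right]
        have hmem : n.1 ∈ D := ⟨n, hn, rfl⟩
        have : (inner ℂ n.1 a : ℂ) = 0 := (Submodule.mem_orthogonal D a).1 ha n.1 hmem
        rw [this, mul_zero]
      have hpy : ‖n.1 + t • a‖ ^ 2 = ‖n.1‖ ^ 2 + ‖t • a‖ ^ 2 := by
        have h := norm_add_sq_eq_norm_sq_add_norm_sq_of_inner_eq_zero _ _ hinner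
        simpa [pow_two] using h
      have h1 : ‖n.1‖ ≤ ‖n‖ := norm_fst_le n
      have h2 : ‖n.2‖ ≤ ‖n‖ := norm_snd_le n
      have h1sq : ‖n.1‖ ^ 2 ≤ ‖n‖ ^ 2 := by nlinarith [norm_nonneg n.1, norm_nonneg n]
      have h2sq : ‖n.2‖ ^ 2 ≤ ‖n‖ ^ 2 := by nlinarith [norm_nonneg n.2, norm_nonneg n]
      have hxle : ‖n + t • ((a, (0 : Hm)) : Hp × Hm)‖ ^ 2 ≤ ‖n‖ ^ 2 + ‖t • a‖ ^ 2 := by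
        rcases max_cases ‖(n + t • ((a, (0 : Hm)) : Hp × Hm)).1‖
            ‖(n + t • ((a, (0 : Hm)) : Hp × Hm)).2‖ with ⟨hmx, _⟩ | ⟨hmx, _⟩ <;>
          rw [Prod.norm_def, hmx]
        · rw [hs1, hpy]
          linarith
        · rw [hs2]
          nlinarith [norm_nonneg (t • a)]
      have hen := hest n hn
      have hta : (0:ℝ) ≤ ‖t • a‖ ^ 2 := by positivity
      have hcc : c' ≤ c := min_le_left _ _
      have hc1' : c' ≤ 1 := min_le_right _ _
      rw [hs1, hs2, hpy]
      nlinarith [norm_nonneg n, mul_le_mul_of_nonneg_left hxle (le_of_lt hc'0)]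
    set N' := N''.topologicalClosure with hN'
    have hsubset : (N' : Set (Hp × Hm)) ⊆ {y : Hp × Hm | c' * ‖y‖ ^ 2 ≤ ‖y.1‖ ^ 2 - ‖y.2‖ ^ 2} := by
      have hcl2 : IsClosed {y : Hp × Hm | c' * ‖y‖ ^ 2 ≤ ‖y.1‖ ^ 2 - ‖y.2‖ ^ 2} := by
        apply isClosed_le
        · exact (continuous_const.mul ((continuous_norm).pow 2))
        · exact ((continuous_fst.norm.pow 2).sub (continuous_snd.norm.pow 2))
      exact closure_minimal (fun y hy => hest'' y hy) hcl2
    have hcpd : IsCPD N' :=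
      ⟨N''.isClosed_topologicalClosure, c', hc'0,
        fun x hx => by rw [aux_Qre]; exact hsubset hx⟩
    have heq : N' = N := hmax N' hcpd (le_trans le_sup_left N''.le_topologicalClosure)
    have hmemN : ((a, (0 : Hm)) : Hp × Hm) ∈ N := by
      rw [← heq]
      exact N''.le_topologicalClosure
        (Submodule.mem_sup_right (Submodule.mem_span_singleton_self _))
    have haD : a ∈ D := ⟨_, hmemN, rfl⟩
    have h0 : (inner ℂ a a : ℂ) = 0 := (Submodule.mem_orthogonal D a).1 ha a haD
    exact inner_self_eq_zero.1 h0
  have hDtop : D = ⊤ := by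
    have h1 : Dᗮᗮ = D.topologicalClosure := Submodule.orthogonal_orthogonal_eq_closure D
    rw [horth, Submodule.bot_orthogonal_eq_top] at h1
    rw [← hDclosed.submodule_topologicalClosure_eq, ← h1]
  intro u
  have : u ∈ D := by rw [hDtop]; trivial
  rcases this with ⟨x, hx, rfl⟩
  exact ⟨x.2, hx⟩

/-- A Lagrangian subspace is neutral and its second projection is onto. -/
lemma aux_lag (L : Submodule ℂ (Hp × Hm)) (hLclosed : IsClosed (L : Set (Hp × Hm)))
    (hLlag : (L : Set (Hp × Hm)) = symCompl (L : Set (Hp × Hm))) :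
    (∀ x ∈ L, ‖x.1‖ = ‖x.2‖) ∧ (∀ w : Hm, ∃ u, (u, w) ∈ L) := by
  have hne : ∀ x ∈ L, ‖x.1‖ = ‖x.2‖ := by
    intro x hx
    have hx' : x ∈ symCompl (L : Set (Hp × Hm)) := hLlag ▸ hx
    exact aux_neutral (hx' x hx)
  refine ⟨hne, ?_⟩
  set E := L.map (LinearMap.snd ℂ Hp Hm) with hE
  have hEclosed : IsClosed (E : Set Hm) := by
    haveI : CompleteSpace L := hLclosed.completeSpace_coe
    let f : L →ₗᵢ[ℂ] Hm :=
      ⟨(LinearMap.snd ℂ Hp Hm).comp L.subtype, by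
        intro x
        have hx : ‖(x : Hp × Hm).1‖ = ‖(x : Hp × Hm).2‖ := hne _ x.2
        show ‖(x : Hp × Hm).2‖ = ‖(x : Hp × Hm)‖
        rw [Prod.norm_def, max_eq_right (le_of_eq hx)]⟩
    have hr : Set.range f = (E : Set Hm) := by
      ext y
      constructor
      · rintro ⟨x, rfl⟩; exact ⟨x, x.2, rfl⟩
      · rintro ⟨x, hx, rfl⟩; exact ⟨⟨x, hx⟩, rfl⟩
    rw [← hr]
    exact f.isometry.isClosedEmbedding.isClosed_range
  have horth : Eᗮ = ⊥ := by
    rw [Submodule.eq_bot_iff]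
    intro b hb
    have hmem : ((0, b) : Hp × Hm) ∈ symCompl (L : Set (Hp × Hm)) := by
      intro x hx
      have hx2 : x.2 ∈ E := ⟨x, hx, rfl⟩
      have h1 : (inner ℂ x.2 b : ℂ) = 0 := (Submodule.mem_orthogonal E b).1 hb x.2 hx2
      have h2 : (inner ℂ b x.2 : ℂ) = 0 := inner_eq_zero_symm.1 h1
      simp [stdForm, h2]
    have hLmem : ((0, b) : Hp × Hm) ∈ L := by
      rw [← SetLike.mem_coe, hLlag]; exact hmem
    have := hne _ hLmem
    simp only [norm_zero] at this
    exact norm_eq_zero.1 this.symm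
  have hEtop : E = ⊤ := by
    have h1 : Eᗮᗮ = E.topologicalClosure := Submodule.orthogonal_orthogonal_eq_closure E
    rw [horth, Submodule.bot_orthogonal_eq_top] at h1
    rw [← hEclosed.submodule_topologicalClosure_eq, ← h1]
  intro w
  have : w ∈ E := by rw [hEtop]; trivial
  rcases this with ⟨x, hx, rfl⟩
  exact ⟨x.1, hx⟩

/-- A maximal completely positive-definite subspace `N` and a Lagrangian subspace `L`
(`L = L^⊥s`) are transversal: `N ∩ L = {0}` and `N + L = H`. -/
theorem statement5 (N L : Submodule ℂ (Hp × Hm)) (hN : IsMaxCPD N)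
    (hLclosed : IsClosed (L : Set (Hp × Hm)))
    (hLlag : (L : Set (Hp × Hm)) = symCompl (L : Set (Hp × Hm))) :
    N ⊓ L = ⊥ ∧ N ⊔ L = ⊤ := by
  obtain ⟨k, hk0, hk1, hbN, hsN⟩ := aux_maxCPD N hN
  obtain ⟨hne, hsL⟩ := aux_lag L hLclosed hLlag
  constructor
  · rw [Submodule.eq_bot_iff]
    intro x hx
    have h1 := hbN x hx.1
    have h2 := hne x hx.2
    have hx1 : ‖x.1‖ = 0 := by nlinarith [norm_nonneg x.1]
    have hx2 : ‖x.2‖ = 0 := by rw [← h2]; exact hx1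
    exact Prod.ext (norm_eq_zero.1 hx1) (norm_eq_zero.1 hx2)
  · -- build T (graph map of N) and Vinv (inverse graph map of L)
    obtain ⟨T, hTmem, hTbd⟩ := aux_graphCLM N k hbN hsN
    set swapL : (Hp × Hm) →ₗ[ℂ] (Hm × Hp) :=
      (LinearMap.snd ℂ Hp Hm).prod (LinearMap.fst ℂ Hp Hm) with hswapL
    set Lsw : Submodule ℂ (Hm × Hp) := L.map swapL with hLsw
    have hbsw : ∀ y ∈ Lsw, ‖y.2‖ ≤ 1 * ‖y.1‖ := by
      rintro y ⟨x, hx, rfl⟩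
      simpa [swapL] using (hne x hx).le
    have hssw : ∀ w : Hm, ∃ v : Hp, (w, v) ∈ Lsw := by
      intro w
      obtain ⟨u, hu⟩ := hsL w
      exact ⟨u, ⟨(u, w), hu, rfl⟩⟩
    obtain ⟨Vinv, hVmem, hVbd⟩ := aux_graphCLM Lsw 1 hbsw hssw
    have hVL : ∀ w : Hm, (Vinv w, w) ∈ L := by
      intro w
      obtain ⟨x, hx, hxe⟩ := hVmem w
      have h1 : x.2 = w := congrArg Prod.fst hxe
      have h2 : x.1 = Vinv w := congrArg Prod.snd hxe
      have h3 : x = (Vinv w, w) := Prod.ext h2 h1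
      rwa [h3] at hx
    set S : Hp →L[ℂ] Hp := Vinv.comp T with hS
    have hSnorm : ‖S‖ < 1 := by
      have hle : ‖S‖ ≤ k := by
        apply ContinuousLinearMap.opNorm_le_bound _ hk0
        intro u
        calc ‖S u‖ = ‖Vinv (T u)‖ := rfl
          _ ≤ 1 * ‖T u‖ := hVbd _
          _ = ‖T u‖ := one_mul _
          _ ≤ k * ‖u‖ := hTbd _
      exact lt_of_le_of_lt hle hk1
    set unit := Units.oneSub S hSnorm with hunit
    rw [Submodule.eq_top_iff']
    intro p
    set x : Hp := (↑unit⁻¹ : Hp →L[ℂ] Hp) (p.1 - Vinv p.2) with hx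
    have hx1 : x - S x = p.1 - Vinv p.2 := by
      have h1 : (↑unit * ↑unit⁻¹ : Hp →L[ℂ] Hp) = 1 := unit.mul_inv
      have h2 : ((1 - S) * (↑unit⁻¹ : Hp →L[ℂ] Hp)) (p.1 - Vinv p.2) = p.1 - Vinv p.2 := by
        rw [show ((1 - S : Hp →L[ℂ] Hp)) = (↑unit : Hp →L[ℂ] Hp) from
          (Units.val_oneSub S hSnorm).symm, h1]
        rfl
      calc x - S x = (1 - S) x := by
            simp [ContinuousLinearMap.sub_apply]
        _ = ((1 - S) * (↑unit⁻¹ : Hp →L[ℂ] Hp)) (p.1 - Vinv p.2) := rfl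
        _ = p.1 - Vinv p.2 := h2
    have hp1 : x - S x + Vinv p.2 = p.1 := by rw [hx1]; abel
    have h2 : Vinv p.2 - S x = p.1 - x := by rw [← hp1]; abel
    have hfirst : Vinv (p.2 - T x) = p.1 - x := by
      rw [map_sub]
      exact h2
    have memN : (x, T x) ∈ N := hTmem x
    have memL : (p.1 - x, p.2 - T x) ∈ L := by
      rw [← hfirst]
      exact hVL (p.2 - T x)
    apply Submodule.mem_sup.2
    refine ⟨(x, T x), memN, (p.1 - x, p.2 - T x), memL, ?_⟩
    ext <;> simp

end
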